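/- Let 0 < a < 1 be given. There exist a constant K_5 = K_5(a) > 0 and β_0 > 0 such that for all 0 < β ≤ β_0 and all integers R with 1 ≤ R ≤ K_5 β^{−4}, E^{⊗2}_{(0,0)}[e^{2Φ(β)(B_R(S¹,S²)+1)} − 1] ≤ a, where Φ(β) = Λ(2β) − 2Λ(β). -/

import Mathlib

open MeasureTheory ProbabilityTheory Filter Real

noncomputable section

open scoped Classical in
/-- Indicator (as a real number) of a proposition. -/
noncomputable def ind (P : Prop) : ℝ := if P then 1 else 0

/-- A `±1` step of the simple random walk, encoded by a `Bool`. -/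
def rwStep (b : Bool) : ℤ := if b then 1 else -1

/-- Position at time `j` of the walk started at `x` with steps `σ`. -/
def pos (x : ℤ) {N : ℕ} (σ : Fin N → Bool) (j : ℕ) : ℤ :=
  x + ∑ i ∈ Finset.univ.filter (fun i : Fin N => (i : ℕ) < j), rwStep (σ i)

/-- Local time at `0` of the walk up to time `N`: `L_N = Σ_{j=1}^N 1_{S_j = 0}`. -/
def locTime (x : ℤ) {N : ℕ} (σ : Fin N → Bool) : ℝ :=
  ∑ j ∈ Finset.range N, ind (pos x σ (j + 1) = 0)

/-- Hamiltonian `H_N^u(S) = Σ_{j=1}^N (v(j,S_j) + u 1_{S_j=0})` in environment `V`. -/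
def hamil (u : ℝ) (V : ℕ × ℤ → ℝ) (x : ℤ) {N : ℕ} (σ : Fin N → Bool) : ℝ :=
  ∑ j ∈ Finset.range N,
    (V (j + 1, pos x σ (j + 1)) + u * ind (pos x σ (j + 1) = 0))

/-- Quenched partition function `Z_N^{β,u,q} = E_x[e^{β H_N^u(S)}]`, walk started at `x`. -/
def qZ (β u : ℝ) (V : ℕ × ℤ → ℝ) (N : ℕ) (x : ℤ) : ℝ :=
  (∑ σ : Fin N → Bool, Real.exp (β * hamil u V x σ)) / 2 ^ N

/-- Constrained partition function `Z_N(x,y;V) = E_x[e^{β H_N^u(S)} 1_{S_N=y}]`. -/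
def qZc (β u : ℝ) (V : ℕ × ℤ → ℝ) (N : ℕ) (x y : ℤ) : ℝ :=
  (∑ σ : Fin N → Bool, ind (pos x σ N = y) * Real.exp (β * hamil u V x σ)) / 2 ^ N

/-- Homogeneous pinning partition function `E_x[e^{γ L_N(S)}]`. -/
def homZ (γ : ℝ) (N : ℕ) (x : ℤ) : ℝ :=
  (∑ σ : Fin N → Bool, Real.exp (γ * locTime x σ)) / 2 ^ N

/-- Space-time shift of the environment: `(θ_{n,y}V)(k,z) = V(k+n, z+y)`. -/
def envShift (n : ℕ) (y : ℤ) (V : ℕ × ℤ → ℝ) : ℕ × ℤ → ℝ :=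
  fun p => V (p.1 + n, p.2 + y)

/-- Log moment generating function `Λ(β) = log E^Q[e^{β v(1,0)}]` of the disorder. -/
def logMGF (Q : Measure ((ℕ × ℤ) → ℝ)) (β : ℝ) : ℝ :=
  Real.log (∫ V, Real.exp (β * V (1, 0)) ∂Q)

/-- Assumptions on the disorder law `Q`: the environment variables are i.i.d.,
with mean `0`, variance `1`, and all exponential moments finite. -/
structure EnvAssumptions (Q : Measure ((ℕ × ℤ) → ℝ)) : Prop where
  prob : IsProbabilityMeasure Q
  indep : iIndepFun (fun p (V : (ℕ × ℤ) → ℝ) => V p) Q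
  ident : ∀ p : ℕ × ℤ, IdentDistrib (fun V : (ℕ × ℤ) → ℝ => V p)
      (fun V : (ℕ × ℤ) → ℝ => V (1, 0)) Q Q
  mean_zero : ∫ V, V (1, 0) ∂Q = 0
  variance_one : ∫ V, (V (1, 0)) ^ 2 ∂Q = 1
  exp_moment : ∀ β : ℝ, Integrable (fun V : (ℕ × ℤ) → ℝ => Real.exp (β * V (1, 0))) Q


/-- Overlap `B_R(s¹,s²) = Σ_{i=1}^R 1_{s¹_i = s²_i}` of two walks of length `R`, both
started at `0`. -/
def overlap {R : ℕ} (σ τ : Fin R → Bool) : ℝ :=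
  ∑ j ∈ Finset.range R, ind (pos 0 σ (j + 1) = pos 0 τ (j + 1))

/-- `E^{⊗2}_{(0,0)}[e^{c (B_R + 1)} − 1]` for two independent SSRWs started at `0`. -/
def overlapExp (c : ℝ) (R : ℕ) : ℝ :=
  (∑ στ : (Fin R → Bool) × (Fin R → Bool),
    (Real.exp (c * (overlap στ.1 στ.2 + 1)) - 1)) / 4 ^ R

-- ind lemmas
lemma ind_nonneg (P : Prop) : 0 ≤ ind P := by unfold ind; split <;> norm_num

lemma ind_pos {P : Prop} (h : P) : ind P = 1 := if_pos h
lemma ind_neg {P : Prop} (h : ¬ P) : ind P = 0 := if_neg h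

lemma ind_congr {P Q : Prop} (h : P ↔ Q) : ind P = ind Q := by
  unfold ind
  by_cases hP : P
  · rw [if_pos hP, if_pos (h.mp hP)]
  · rw [if_neg hP, if_neg (fun hq => hP (h.mpr hq))]

-- step function on ℕ
def stepF {N : ℕ} (σ : Fin N → Bool) (i : ℕ) : ℤ :=
  if h : i < N then rwStep (σ ⟨i, h⟩) else 0

lemma pos_eq_range {N : ℕ} (x : ℤ) (σ : Fin N → Bool) (j : ℕ) (hj : j ≤ N) :
    pos x σ j = x + ∑ i ∈ Finset.range j, stepF σ i := by
  unfold pos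
  congr 1
  rw [Finset.sum_filter]
  have h1 : ∀ i : Fin N, (if (i : ℕ) < j then rwStep (σ i) else 0)
      = (fun k => if k < j then stepF σ k else 0) (i : ℕ) := by
    intro i
    by_cases h : (i : ℕ) < j
    · simp only [h, if_true, stepF, dif_pos i.2, Fin.eta]
    · simp [h]
  rw [Finset.sum_congr rfl (fun i _ => h1 i),
    Fin.sum_univ_eq_sum_range (fun k => if k < j then stepF σ k else 0) N]
  have h2 : ∑ i ∈ Finset.range N, (if i < j then stepF σ i else 0)
      = ∑ i ∈ (Finset.range N).filter (fun i => i < j), stepF σ i := by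
    rw [Finset.sum_filter]
  rw [h2]
  congr 1
  ext k
  simp only [Finset.mem_filter, Finset.mem_range]
  omega

lemma pos_append_left {s d : ℕ} (α : Fin s → Bool) (γ : Fin d → Bool) (t : ℕ) (ht : t ≤ s) :
    pos 0 (Fin.append α γ) t = pos 0 α t := by
  rw [pos_eq_range 0 _ t (le_trans ht (Nat.le_add_right s d)), pos_eq_range 0 α t ht]
  congr 1
  apply Finset.sum_congr rfl
  intro i hi
  have hi' : i < s := lt_of_lt_of_le (Finset.mem_range.mp hi) ht
  have hisd : i < s + d := lt_of_lt_of_le hi' (Nat.le_add_right s d)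
  simp only [stepF, dif_pos hi', dif_pos hisd]
  congr 1
  have : (⟨i, hisd⟩ : Fin (s + d)) = Fin.castAdd d ⟨i, hi'⟩ := by ext; rfl
  rw [this, Fin.append_left]

lemma pos_append_right {s d : ℕ} (α : Fin s → Bool) (γ : Fin d → Bool) (i : ℕ) (hi : i ≤ d) :
    pos 0 (Fin.append α γ) (s + i) = pos 0 α s + pos 0 γ i := by
  rw [pos_eq_range 0 _ (s + i) (by omega), pos_eq_range 0 α s le_rfl,
    pos_eq_range 0 γ i hi, Finset.sum_range_add]
  have h1 : ∑ k ∈ Finset.range s, stepF (Fin.append α γ) k = ∑ k ∈ Finset.range s, stepF α k := by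
    apply Finset.sum_congr rfl
    intro k hk
    have hk' : k < s := Finset.mem_range.mp hk
    have hksd : k < s + d := by omega
    simp only [stepF, dif_pos hk', dif_pos hksd]
    congr 1
    have : (⟨k, hksd⟩ : Fin (s + d)) = Fin.castAdd d ⟨k, hk'⟩ := by ext; rfl
    rw [this, Fin.append_left]
  have h2 : ∑ k ∈ Finset.range i, stepF (Fin.append α γ) (s + k)
      = ∑ k ∈ Finset.range i, stepF γ k := by
    apply Finset.sum_congr rfl
    intro k hk
    have hk' : k < d := lt_of_lt_of_le (Finset.mem_range.mp hk) hi
    have hksd : s + k < s + d := by omega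
    simp only [stepF, dif_pos hk', dif_pos hksd]
    congr 1
    have : (⟨s + k, hksd⟩ : Fin (s + d)) = Fin.natAdd s ⟨k, hk'⟩ := by ext; rfl
    rw [this, Fin.append_right]
  rw [h1, h2]
  ring

-- true count
def trueCount {s : ℕ} (α : Fin s → Bool) : ℕ := (Finset.univ.filter fun i => α i = true).card

lemma sum_rwStep {s : ℕ} (α : Fin s → Bool) :
    ∑ i, rwStep (α i) = 2 * (trueCount α : ℤ) - s := by
  unfold rwStep
  rw [Finset.sum_ite (f := fun _ => (1:ℤ)) (g := fun _ => (-1:ℤ))]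
  simp only [Finset.sum_const, nsmul_eq_mul, mul_one, mul_neg_one]
  have h := Finset.card_filter_add_card_filter_not
    (s := (Finset.univ : Finset (Fin s))) (p := fun i => α i = true)
  rw [Finset.card_univ, Fintype.card_fin] at h
  unfold trueCount
  have h2 : ((Finset.univ.filter fun i => ¬ α i = true).card : ℤ)
      = (s : ℤ) - (Finset.univ.filter fun i => α i = true).card := by
    omega
  rw [h2]
  ring

lemma pos_full {s : ℕ} (α : Fin s → Bool) :
    pos 0 α s = 2 * (trueCount α : ℤ) - s := by
  unfold pos
  rw [zero_add]
  have : Finset.univ.filter (fun i : Fin s => (i : ℕ) < s) = Finset.univ := by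
    ext i; simp [i.2]
  rw [this, sum_rwStep]

lemma pos_eq_iff_trueCount {s : ℕ} (α β : Fin s → Bool) :
    pos 0 α s = pos 0 β s ↔ trueCount α = trueCount β := by
  rw [pos_full, pos_full]
  omega

lemma trueCount_le {s : ℕ} (α : Fin s → Bool) : trueCount α ≤ s := by
  unfold trueCount
  calc (Finset.univ.filter fun i => α i = true).card ≤ (Finset.univ : Finset (Fin s)).card :=
        Finset.card_filter_le _ _
    _ = s := by rw [Finset.card_univ, Fintype.card_fin]

lemma card_trueCount (s k : ℕ) :
    (Finset.univ.filter fun α : Fin s → Bool => trueCount α = k).card = s.choose k := by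
  have hcard : (Finset.powersetCard k (Finset.univ : Finset (Fin s))).card = s.choose k := by
    rw [Finset.card_powersetCard, Finset.card_univ, Fintype.card_fin]
  rw [← hcard]
  apply Finset.card_bij (fun α _ => Finset.univ.filter fun i => α i = true)
  · intro α hα
    rw [Finset.mem_powersetCard]
    exact ⟨Finset.filter_subset _ _, Finset.mem_filter.mp hα |>.2⟩
  · intro α hα β hβ h
    funext i
    have := Finset.ext_iff.mp h i
    simp only [Finset.mem_filter, Finset.mem_univ, true_and] at this
    cases hb : β i
    · cases ha : α i
      · rfl
      · exact absurd (this.mp ha) (by simp [hb])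
    · cases ha : α i
      · exact absurd (this.mpr hb) (by simp [ha])
      · rfl
  · intro S hS
    rw [Finset.mem_powersetCard] at hS
    refine ⟨fun i => decide (i ∈ S), ?_, ?_⟩
    · rw [Finset.mem_filter]
      refine ⟨Finset.mem_univ _, ?_⟩
      unfold trueCount
      rw [← hS.2]
      congr 1
      ext i
      simp
    · ext i
      simp

-- Vandermonde in our form
lemma sum_choose_sq (s : ℕ) :
    ∑ k ∈ Finset.range (s + 1), s.choose k * s.choose k = Nat.centralBinom s := by
  rw [Nat.centralBinom, two_mul, Nat.add_choose_eq, Finset.Nat.sum_antidiagonal_eq_sum_range_succ_mk]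
  apply Finset.sum_congr rfl
  intro k hk
  have hk' : k ≤ s := Nat.lt_succ_iff.mp (Finset.mem_range.mp hk)
  simp only
  rw [Nat.choose_symm hk']

-- the key counting identity
lemma sum_ind_eq_centralBinom (s : ℕ) :
    ∑ αβ : (Fin s → Bool) × (Fin s → Bool), ind (pos 0 αβ.1 s = pos 0 αβ.2 s)
      = (Nat.centralBinom s : ℝ) := by
  have h1 : ∀ αβ : (Fin s → Bool) × (Fin s → Bool),
      ind (pos 0 αβ.1 s = pos 0 αβ.2 s)
        = ∑ k ∈ Finset.range (s + 1), ind (trueCount αβ.1 = k) * ind (trueCount αβ.2 = k) := by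
    intro p
    obtain ⟨α, β⟩ := p
    simp only
    rw [ind_congr (pos_eq_iff_trueCount α β)]
    by_cases h : trueCount α = trueCount β
    · have heach : ∀ k, ind (trueCount α = k) * ind (trueCount β = k) = ind (trueCount α = k) := by
        intro k
        by_cases hk : trueCount α = k
        · have hbk : trueCount β = k := h.symm.trans hk
          rw [ind_pos hbk, mul_one]
        · rw [ind_neg hk, zero_mul]
      rw [Finset.sum_congr rfl fun k _ => heach k, ind_pos h, eq_comm]
      have hmem : trueCount α ∈ Finset.range (s + 1) :=
        Finset.mem_range.mpr (Nat.lt_succ_of_le (trueCount_le α))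
      rw [Finset.sum_eq_single (trueCount α)
        (fun k _ hk => ind_neg (fun hh => hk hh.symm)) (fun hmem' => absurd hmem hmem')]
      exact ind_pos rfl
    · rw [ind_neg h, eq_comm]
      apply Finset.sum_eq_zero
      intro k _
      by_cases hk : trueCount α = k
      · have hb : ¬ trueCount β = k := fun hb => h (hk.trans hb.symm)
        rw [ind_neg hb, mul_zero]
      · rw [ind_neg hk, zero_mul]
  rw [Finset.sum_congr rfl fun x _ => h1 x, Finset.sum_comm]
  have h2 : ∀ k, ∑ αβ : (Fin s → Bool) × (Fin s → Bool),
      ind (trueCount αβ.1 = k) * ind (trueCount αβ.2 = k) = (s.choose k : ℝ) ^ 2 := by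
    intro k
    rw [Fintype.sum_prod_type]
    have hfac : ∀ α : Fin s → Bool, ∑ β : Fin s → Bool, ind (trueCount α = k) * ind (trueCount β = k)
        = ind (trueCount α = k) * ∑ β : Fin s → Bool, ind (trueCount β = k) := by
      intro α; rw [Finset.mul_sum]
    rw [Finset.sum_congr rfl fun α _ => hfac α, ← Finset.sum_mul]
    have h3 : ∑ α : Fin s → Bool, ind (trueCount α = k) = (s.choose k : ℝ) := by
      have hconv : ∀ α : Fin s → Bool, ind (trueCount α = k) = if trueCount α = k then (1:ℝ) else 0 := by
        intro α
        by_cases h : trueCount α = k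
        · rw [ind_pos h, if_pos h]
        · rw [ind_neg h, if_neg h]
      rw [Finset.sum_congr rfl fun α _ => hconv α, Finset.sum_boole, card_trueCount]
    rw [h3]
    ring
  rw [Finset.sum_congr rfl fun k _ => h2 k]
  rw [← sum_choose_sq s]
  push_cast
  apply Finset.sum_congr rfl
  intro k _
  ring
lemma cb_sq_le (n : ℕ) : Nat.centralBinom n ^ 2 * (2 * n + 1) ≤ 16 ^ n := by
  induction n with
  | zero => simp [Nat.centralBinom]
  | succ n ih =>
    have h := Nat.succ_mul_centralBinom_succ n
    have key : (n + 1) ^ 2 * (Nat.centralBinom (n + 1) ^ 2 * (2 * (n + 1) + 1))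
        ≤ (n + 1) ^ 2 * 16 ^ (n + 1) := by
      have e1 : (n + 1) ^ 2 * (Nat.centralBinom (n + 1) ^ 2 * (2 * (n + 1) + 1))
          = ((n + 1) * Nat.centralBinom (n + 1)) ^ 2 * (2 * n + 3) := by ring
      rw [e1, h]
      have e2 : (2 * (2 * n + 1) * Nat.centralBinom n) ^ 2 * (2 * n + 3)
          = (4 * (2 * n + 1) * (2 * n + 3)) * (Nat.centralBinom n ^ 2 * (2 * n + 1)) := by ring
      rw [e2]
      calc (4 * (2 * n + 1) * (2 * n + 3)) * (Nat.centralBinom n ^ 2 * (2 * n + 1))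
          ≤ (4 * (2 * n + 1) * (2 * n + 3)) * 16 ^ n :=
            Nat.mul_le_mul_left _ ih
        _ ≤ (16 * (n + 1) ^ 2) * 16 ^ n := by
            apply Nat.mul_le_mul_right
            nlinarith
        _ = (n + 1) ^ 2 * 16 ^ (n + 1) := by ring
    exact Nat.le_of_mul_le_mul_left key (by positivity)

lemma u_le_inv_sqrt (s : ℕ) (hs : 1 ≤ s) :
    (Nat.centralBinom s : ℝ) / 4 ^ s ≤ 1 / Real.sqrt s := by
  have hs0 : (0:ℝ) < s := by exact_mod_cast hs
  have h4 : (0:ℝ) < 4 ^ s := by positivity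
  have hsq : ((Nat.centralBinom s : ℝ) / 4 ^ s) ^ 2 ≤ 1 / s := by
    have hcb : (Nat.centralBinom s : ℝ) ^ 2 * (2 * s + 1) ≤ 16 ^ s := by
      exact_mod_cast cb_sq_le s
    have h16 : (16:ℝ) ^ s = (4 ^ s) ^ 2 := by
      rw [← pow_mul, mul_comm s 2, pow_mul]
      norm_num
    rw [div_pow, div_le_div_iff₀ (by positivity) hs0]
    rw [h16] at hcb
    nlinarith [sq_nonneg ((Nat.centralBinom s : ℝ))]
  have h1 : (Nat.centralBinom s : ℝ) / 4 ^ s = Real.sqrt (((Nat.centralBinom s : ℝ) / 4 ^ s) ^ 2) := by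
    rw [Real.sqrt_sq (by positivity)]
  rw [h1]
  calc Real.sqrt (((Nat.centralBinom s : ℝ) / 4 ^ s) ^ 2) ≤ Real.sqrt (1 / s) :=
        Real.sqrt_le_sqrt hsq
    _ = 1 / Real.sqrt s := by
        rw [one_div, one_div, Real.sqrt_inv]

lemma sum_inv_sqrt_le (R : ℕ) :
    ∑ j ∈ Finset.range R, 1 / Real.sqrt (j + 1) ≤ 2 * Real.sqrt R := by
  induction R with
  | zero => simp
  | succ R ih =>
    rw [Finset.sum_range_succ]
    have ha : Real.sqrt R ^ 2 = R := Real.sq_sqrt (by positivity)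
    have hb : Real.sqrt (R + 1) ^ 2 = (R : ℝ) + 1 := Real.sq_sqrt (by positivity)
    have hb0 : (0:ℝ) < Real.sqrt (R + 1) := Real.sqrt_pos.mpr (by positivity)
    have ha0 : (0:ℝ) ≤ Real.sqrt R := Real.sqrt_nonneg _
    have key : 1 / Real.sqrt ((R:ℝ) + 1) ≤ 2 * Real.sqrt ((R:ℝ) + 1) - 2 * Real.sqrt R := by
      rw [div_le_iff₀ hb0]
      nlinarith [sq_nonneg (Real.sqrt ((R:ℝ)+1) - Real.sqrt R)]
    have hcast : ((R:ℝ) + 1) = ((R + 1 : ℕ) : ℝ) := by push_cast; ring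
    calc ∑ j ∈ Finset.range R, 1 / Real.sqrt (j + 1) + 1 / Real.sqrt ((R:ℝ) + 1)
        ≤ 2 * Real.sqrt R + (2 * Real.sqrt ((R:ℝ) + 1) - 2 * Real.sqrt R) := by
          exact add_le_add ih key
      _ = 2 * Real.sqrt ((R + 1 : ℕ) : ℝ) := by rw [← hcast]; ring


def Zfun (c : ℝ) (n : ℕ) : ℝ :=
  (∑ στ : (Fin n → Bool) × (Fin n → Bool), Real.exp (c * overlap στ.1 στ.2)) / 4 ^ n

lemma factor (c : ℝ) (s d n : ℕ) (h : s + d = n) :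
    ∑ στ : (Fin n → Bool) × (Fin n → Bool),
      ind (pos 0 στ.1 s = pos 0 στ.2 s) *
        Real.exp (c * ∑ i ∈ Finset.Ico s n, ind (pos 0 στ.1 (i+1) = pos 0 στ.2 (i+1)))
    = (Nat.centralBinom s : ℝ) *
      ∑ γδ : (Fin d → Bool) × (Fin d → Bool), Real.exp (c * overlap γδ.1 γδ.2) := by
  subst h
  let e := Fin.appendEquiv (α := Bool) s d
  set F : (Fin (s+d) → Bool) × (Fin (s+d) → Bool) → ℝ := fun στ =>
    ind (pos 0 στ.1 s = pos 0 στ.2 s) *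
      Real.exp (c * ∑ i ∈ Finset.Ico s (s+d), ind (pos 0 στ.1 (i+1) = pos 0 στ.2 (i+1))) with hF
  have hsum : ∑ στ : (Fin (s+d) → Bool) × (Fin (s+d) → Bool), F στ
      = ∑ q : ((Fin s → Bool) × (Fin d → Bool)) × ((Fin s → Bool) × (Fin d → Bool)),
          F (Equiv.prodCongr e e q) := (Equiv.sum_comp (Equiv.prodCongr e e) F).symm
  rw [hsum]
  have hterm : ∀ q : ((Fin s → Bool) × (Fin d → Bool)) × ((Fin s → Bool) × (Fin d → Bool)),
      F (Equiv.prodCongr e e q)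
        = ind (pos 0 q.1.1 s = pos 0 q.2.1 s) * Real.exp (c * overlap q.1.2 q.2.2) := by
    rintro ⟨⟨α, γ⟩, ⟨β, δ⟩⟩
    have happ : Equiv.prodCongr e e ((α, γ), (β, δ)) = (Fin.append α γ, Fin.append β δ) := rfl
    rw [happ, hF]
    simp only
    rw [ind_congr (by rw [pos_append_left α γ s le_rfl, pos_append_left β δ s le_rfl] :
      (pos 0 (Fin.append α γ) s = pos 0 (Fin.append β δ) s) ↔ (pos 0 α s = pos 0 β s))]
    by_cases hp : pos 0 α s = pos 0 β s
    · have hd : s + d - s = d := by omega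
      have hsum2 : ∑ i ∈ Finset.Ico s (s+d),
          ind (pos 0 (Fin.append α γ) (i+1) = pos 0 (Fin.append β δ) (i+1)) = overlap γ δ := by
        rw [Finset.sum_Ico_eq_sum_range, hd]
        unfold overlap
        apply Finset.sum_congr rfl
        intro i hi
        have hi' : i + 1 ≤ d := Finset.mem_range.mp hi
        have h1 : s + i + 1 = s + (i + 1) := by omega
        rw [h1, pos_append_right α γ (i+1) hi', pos_append_right β δ (i+1) hi']
        apply ind_congr
        rw [hp, add_right_inj]
      rw [hsum2]
    · rw [ind_neg hp, zero_mul, zero_mul]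
  rw [Finset.sum_congr rfl fun q _ => hterm q]
  have hswap : ∑ q : ((Fin s → Bool) × (Fin d → Bool)) × ((Fin s → Bool) × (Fin d → Bool)),
      ind (pos 0 q.1.1 s = pos 0 q.2.1 s) * Real.exp (c * overlap q.1.2 q.2.2)
      = ∑ r : ((Fin s → Bool) × (Fin s → Bool)) × ((Fin d → Bool) × (Fin d → Bool)),
          ind (pos 0 r.1.1 s = pos 0 r.1.2 s) * Real.exp (c * overlap r.2.1 r.2.2) := by
    exact (Equiv.sum_comp (Equiv.prodProdProdComm (Fin s → Bool) (Fin s → Bool)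
      (Fin d → Bool) (Fin d → Bool)).symm
      (fun r => ind (pos 0 r.1.1 s = pos 0 r.1.2 s) * Real.exp (c * overlap r.2.1 r.2.2))).symm ▸ rfl
  rw [hswap, Fintype.sum_prod_type]
  have hinner : ∀ ab : (Fin s → Bool) × (Fin s → Bool),
      ∑ gd : (Fin d → Bool) × (Fin d → Bool),
        ind (pos 0 ab.1 s = pos 0 ab.2 s) * Real.exp (c * overlap gd.1 gd.2)
      = ind (pos 0 ab.1 s = pos 0 ab.2 s) *
          ∑ gd : (Fin d → Bool) × (Fin d → Bool), Real.exp (c * overlap gd.1 gd.2) := by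
    intro ab; rw [Finset.mul_sum]
  rw [Finset.sum_congr rfl fun ab _ => hinner ab, ← Finset.sum_mul, sum_ind_eq_centralBinom]

lemma telescope (c : ℝ) (n : ℕ) (σ τ : Fin n → Bool) :
    Real.exp (c * overlap σ τ) - 1
      = ∑ j ∈ Finset.range n, ind (pos 0 σ (j+1) = pos 0 τ (j+1)) * (Real.exp c - 1) *
          Real.exp (c * ∑ i ∈ Finset.Ico (j+1) n, ind (pos 0 σ (i+1) = pos 0 τ (i+1))) := by
  set T : ℕ → ℝ := fun t => ∑ i ∈ Finset.Ico t n, ind (pos 0 σ (i+1) = pos 0 τ (i+1)) with hT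
  have h0 : T 0 = overlap σ τ := by rw [hT]; simp only; rw [overlap, Finset.range_eq_Ico]
  have hn : T n = 0 := by rw [hT]; simp
  have tele : ∑ j ∈ Finset.range n, (Real.exp (c * T j) - Real.exp (c * T (j+1)))
      = Real.exp (c * T 0) - Real.exp (c * T n) :=
    Finset.sum_range_sub' (fun j => Real.exp (c * T j)) n
  rw [h0, hn, mul_zero, Real.exp_zero] at tele
  rw [← tele]
  apply Finset.sum_congr rfl
  intro j hj
  have hjn : j < n := Finset.mem_range.mp hj
  have hsplit : T j = ind (pos 0 σ (j+1) = pos 0 τ (j+1)) + T (j+1) := by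
    rw [hT]
    exact Finset.sum_eq_sum_Ico_succ_bot hjn _
  by_cases hp : pos 0 σ (j+1) = pos 0 τ (j+1)
  · rw [ind_pos hp] at hsplit ⊢
    rw [hsplit, mul_add, Real.exp_add, mul_one]
    ring
  · rw [ind_neg hp] at hsplit ⊢
    rw [hsplit, zero_add, zero_mul, zero_mul, sub_self]

lemma Zfun_rec (c : ℝ) (n : ℕ) :
    Zfun c n = 1 + (Real.exp c - 1) *
      ∑ j ∈ Finset.range n, (Nat.centralBinom (j+1) : ℝ) / 4 ^ (j+1) * Zfun c (n - (j+1)) := by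
  have h4n : (0:ℝ) < 4 ^ n := by positivity
  have hcard : ∑ στ : (Fin n → Bool) × (Fin n → Bool), (1:ℝ) = 4 ^ n := by
    rw [Finset.sum_const, Finset.card_univ, nsmul_eq_mul, mul_one]
    rw [Fintype.card_prod, Fintype.card_fun, Fintype.card_fin, Fintype.card_bool]
    push_cast
    rw [← mul_pow]
    norm_num
  have key : ∑ στ : (Fin n → Bool) × (Fin n → Bool), Real.exp (c * overlap στ.1 στ.2)
      = 4 ^ n + (Real.exp c - 1) *
        ∑ j ∈ Finset.range n, (Nat.centralBinom (j+1) : ℝ) * (Zfun c (n - (j+1)) * 4 ^ (n - (j+1))) := by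
    have hsub : ∑ στ : (Fin n → Bool) × (Fin n → Bool),
        (Real.exp (c * overlap στ.1 στ.2) - 1)
        = ∑ στ : (Fin n → Bool) × (Fin n → Bool), Real.exp (c * overlap στ.1 στ.2) - 4 ^ n := by
      rw [Finset.sum_sub_distrib, hcard]
    have htel : ∑ στ : (Fin n → Bool) × (Fin n → Bool), (Real.exp (c * overlap στ.1 στ.2) - 1)
        = (Real.exp c - 1) * ∑ j ∈ Finset.range n,
            ∑ στ : (Fin n → Bool) × (Fin n → Bool),
              ind (pos 0 στ.1 (j+1) = pos 0 στ.2 (j+1)) *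
                Real.exp (c * ∑ i ∈ Finset.Ico (j+1) n, ind (pos 0 στ.1 (i+1) = pos 0 στ.2 (i+1))) := by
      rw [Finset.mul_sum]
      have hpt : ∀ στ : (Fin n → Bool) × (Fin n → Bool),
          Real.exp (c * overlap στ.1 στ.2) - 1
            = ∑ j ∈ Finset.range n, ind (pos 0 στ.1 (j+1) = pos 0 στ.2 (j+1)) * (Real.exp c - 1) *
                Real.exp (c * ∑ i ∈ Finset.Ico (j+1) n, ind (pos 0 στ.1 (i+1) = pos 0 στ.2 (i+1))) :=
        fun στ => telescope c n στ.1 στ.2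
      rw [Finset.sum_congr rfl fun στ _ => hpt στ, Finset.sum_comm]
      apply Finset.sum_congr rfl
      intro j _
      rw [Finset.mul_sum]
      apply Finset.sum_congr rfl
      intro στ _
      ring
    have hfac : ∀ j ∈ Finset.range n,
        ∑ στ : (Fin n → Bool) × (Fin n → Bool),
          ind (pos 0 στ.1 (j+1) = pos 0 στ.2 (j+1)) *
            Real.exp (c * ∑ i ∈ Finset.Ico (j+1) n, ind (pos 0 στ.1 (i+1) = pos 0 στ.2 (i+1)))
        = (Nat.centralBinom (j+1) : ℝ) * (Zfun c (n - (j+1)) * 4 ^ (n - (j+1))) := by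
      intro j hj
      have hjn : j < n := Finset.mem_range.mp hj
      rw [factor c (j+1) (n - (j+1)) n (by omega)]
      congr 1
      rw [Zfun, div_mul_cancel₀]
      positivity
    rw [htel, Finset.sum_congr rfl hfac] at hsub
    linarith [hsub]
  rw [Zfun, key]
  rw [add_div, div_self (ne_of_gt h4n)]
  congr 1
  rw [mul_div_assoc, Finset.sum_div]
  congr 1
  apply Finset.sum_congr rfl
  intro j hj
  have hjn : j < n := Finset.mem_range.mp hj
  have hpow : (4:ℝ) ^ (j+1) * 4 ^ (n - (j+1)) = 4 ^ n := by
    rw [← pow_add]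
    congr 1
    omega
  field_simp
  rw [← hpow]
  ring

lemma Zfun_le (c : ℝ) (ρ : ℝ) (hρ1 : ρ ≤ 1/2) (hρ0 : 0 ≤ ρ) (hc : 0 ≤ c) (R : ℕ)
    (hS : (Real.exp c - 1) * ∑ j ∈ Finset.range R, (Nat.centralBinom (j+1) : ℝ) / 4 ^ (j+1) ≤ ρ) :
    ∀ n, n ≤ R → Zfun c n ≤ 1 / (1 - ρ) := by
  have hec : 0 ≤ Real.exp c - 1 := by
    have := Real.one_le_exp hc
    linarith
  have h1ρ : 0 < 1 - ρ := by linarith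
  intro n
  induction n using Nat.strong_induction_on with
  | _ n ih =>
    intro hnR
    rw [Zfun_rec]
    have hterm : ∀ j ∈ Finset.range n,
        (Nat.centralBinom (j+1) : ℝ) / 4 ^ (j+1) * Zfun c (n - (j+1))
          ≤ (Nat.centralBinom (j+1) : ℝ) / 4 ^ (j+1) * (1 / (1 - ρ)) := by
      intro j hj
      have hjn : j < n := Finset.mem_range.mp hj
      apply mul_le_mul_of_nonneg_left _ (by positivity)
      exact ih (n - (j+1)) (by omega) (by omega)
    have hsum : ∑ j ∈ Finset.range n, (Nat.centralBinom (j+1) : ℝ) / 4 ^ (j+1) * Zfun c (n - (j+1))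
        ≤ (∑ j ∈ Finset.range n, (Nat.centralBinom (j+1) : ℝ) / 4 ^ (j+1)) * (1 / (1 - ρ)) := by
      rw [Finset.sum_mul]
      exact Finset.sum_le_sum hterm
    have hmono : ∑ j ∈ Finset.range n, (Nat.centralBinom (j+1) : ℝ) / 4 ^ (j+1)
        ≤ ∑ j ∈ Finset.range R, (Nat.centralBinom (j+1) : ℝ) / 4 ^ (j+1) := by
      apply Finset.sum_le_sum_of_subset_of_nonneg
      · exact Finset.range_subset_range.mpr hnR
      · intro j _ _; positivity
    have hchain : (Real.exp c - 1) *
        ∑ j ∈ Finset.range n, (Nat.centralBinom (j+1) : ℝ) / 4 ^ (j+1) * Zfun c (n - (j+1))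
        ≤ ρ * (1 / (1 - ρ)) := by
      calc (Real.exp c - 1) *
          ∑ j ∈ Finset.range n, (Nat.centralBinom (j+1) : ℝ) / 4 ^ (j+1) * Zfun c (n - (j+1))
          ≤ (Real.exp c - 1) *
            ((∑ j ∈ Finset.range n, (Nat.centralBinom (j+1) : ℝ) / 4 ^ (j+1)) * (1 / (1 - ρ))) :=
            mul_le_mul_of_nonneg_left hsum hec
        _ = ((Real.exp c - 1) * ∑ j ∈ Finset.range n, (Nat.centralBinom (j+1) : ℝ) / 4 ^ (j+1))
            * (1 / (1 - ρ)) := by ring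
        _ ≤ ρ * (1 / (1 - ρ)) := by
            apply mul_le_mul_of_nonneg_right _ (by positivity)
            calc (Real.exp c - 1) * ∑ j ∈ Finset.range n, (Nat.centralBinom (j+1) : ℝ) / 4 ^ (j+1)
                ≤ (Real.exp c - 1) * ∑ j ∈ Finset.range R, (Nat.centralBinom (j+1) : ℝ) / 4 ^ (j+1) :=
                  mul_le_mul_of_nonneg_left hmono hec
              _ ≤ ρ := hS
    have : 1 + ρ * (1 / (1 - ρ)) = 1 / (1 - ρ) := by field_simp; ring
    linarith [hchain]

-- pointwise inequalities
lemma abs_le_exp_add_exp (t : ℝ) : |t| ≤ Real.exp t + Real.exp (-t) := by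
  have h1 : |t| + 1 ≤ Real.exp |t| := Real.add_one_le_exp _
  have h2 : Real.exp |t| ≤ Real.exp t + Real.exp (-t) := by
    rcases abs_cases t with ⟨h, _⟩ | ⟨h, _⟩
    · rw [h]; nlinarith [Real.exp_pos (-t)]
    · rw [h]; nlinarith [Real.exp_pos t]
  nlinarith
lemma exp_sub_one_abs_le (x : ℝ) : |Real.exp x - 1| ≤ |x| * Real.exp |x| := by
  rcases le_or_gt 0 x with h | h
  · rw [abs_of_nonneg h, abs_of_nonneg (by nlinarith [Real.one_le_exp h] : (0:ℝ) ≤ Real.exp x - 1)]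
    have hmul : Real.exp (-x) * Real.exp x = 1 := by rw [← Real.exp_add]; simp
    nlinarith [Real.add_one_le_exp (-x), Real.exp_pos x]
  · rw [abs_of_neg h, abs_of_nonpos (by nlinarith [Real.exp_lt_one_iff.mpr h] : Real.exp x - 1 ≤ 0)]
    have h1 : x + 1 ≤ Real.exp x := Real.add_one_le_exp x
    have h2 : 1 ≤ Real.exp (-x) := Real.one_le_exp (by linarith)
    nlinarith

lemma sq_le_four_exp_abs (t : ℝ) : t ^ 2 ≤ 4 * Real.exp |t| := by
  have h1 : |t| / 2 + 1 ≤ Real.exp (|t| / 2) := Real.add_one_le_exp _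
  have h2 : Real.exp (|t| / 2) ^ 2 = Real.exp |t| := by
    rw [sq, ← Real.exp_add]; congr 1; ring
  nlinarith [abs_nonneg t, sq_abs t, Real.exp_pos (|t|/2), sq_nonneg (|t|/2 + 1)]


lemma phi_bound (Q : Measure ((ℕ × ℤ) → ℝ)) (hQ : EnvAssumptions Q) :
    ∃ C₀ : ℝ, 1 ≤ C₀ ∧ ∀ β : ℝ, 0 < β → β ≤ 1 →
      0 ≤ logMGF Q (2 * β) - 2 * logMGF Q β ∧
        logMGF Q (2 * β) - 2 * logMGF Q β ≤ C₀ * β ^ 2 := by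
  haveI := hQ.prob
  have hvm : Measurable (fun V : (ℕ × ℤ) → ℝ => V (1, 0)) := measurable_pi_apply _
  set M : ℝ → ℝ := fun b => ∫ V, Real.exp (b * V (1, 0)) ∂Q with hM
  have hInt : ∀ b : ℝ, Integrable (fun V : (ℕ × ℤ) → ℝ => Real.exp (b * V (1, 0))) Q :=
    hQ.exp_moment
  have hIntv : Integrable (fun V : (ℕ × ℤ) → ℝ => V (1, 0)) Q := by
    apply Integrable.mono' ((hInt 1).add (hInt (-1))) hvm.aestronglyMeasurable
    filter_upwards with V
    have := abs_le_exp_add_exp (V (1, 0))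
    simpa [norm_eq_abs, one_mul, neg_one_mul] using this
  have hM1 : ∀ b : ℝ, 1 ≤ M b := by
    intro b
    have hint1 : Integrable (fun V : (ℕ × ℤ) → ℝ => 1 + b * V (1, 0)) Q :=
      (integrable_const 1).add (hIntv.const_mul b)
    have e1 : ∫ V, (1 + b * V (1, 0)) ∂Q = 1 := by
      rw [integral_add (integrable_const 1) (hIntv.const_mul b), integral_const_mul,
        hQ.mean_zero, integral_const]
      simp
    calc (1:ℝ) = ∫ V, (1 + b * V (1, 0)) ∂Q := e1.symm
      _ ≤ M b := by
          apply integral_mono hint1 (hInt b)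
          intro V
          have := Real.add_one_le_exp (b * V (1, 0))
          simp only
          linarith
  have hMpos : ∀ b : ℝ, 0 < M b := fun b => lt_of_lt_of_le one_pos (hM1 b)
  -- expansion identity
  have expand : ∀ (b A : ℝ), ∫ V, (Real.exp (b * V (1, 0)) - A) ^ 2 ∂Q
      = M (2 * b) - 2 * A * M b + A ^ 2 := by
    intro b A
    have hpt : (fun V : (ℕ × ℤ) → ℝ => (Real.exp (b * V (1, 0)) - A) ^ 2)
        = fun V => (Real.exp (2 * b * V (1, 0)) - 2 * A * Real.exp (b * V (1, 0))) + A ^ 2 := by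
      funext V
      have h2 : Real.exp (2 * b * V (1, 0)) = Real.exp (b * V (1, 0)) ^ 2 := by
        rw [sq, ← Real.exp_add]; congr 1; ring
      rw [h2]; ring
    have hint1 : Integrable (fun V : (ℕ × ℤ) → ℝ =>
        Real.exp (2 * b * V (1, 0)) - 2 * A * Real.exp (b * V (1, 0))) Q := by
      exact (hInt (2 * b)).sub ((hInt b).const_mul (2 * A))
    rw [hpt, integral_add hint1 (integrable_const _),
      integral_sub (hInt (2 * b)) ((hInt b).const_mul (2 * A)),
      integral_const_mul, integral_const]
    simp [hM]
  have hVar : ∀ b : ℝ, (M b) ^ 2 ≤ M (2 * b) := by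
    intro b
    have h0 : 0 ≤ ∫ V, (Real.exp (b * V (1, 0)) - M b) ^ 2 ∂Q :=
      integral_nonneg fun V => sq_nonneg _
    rw [expand b (M b)] at h0
    nlinarith
  -- quantitative bound
  set C₁ : ℝ := M 3 + M (-3) with hC₁
  have hC₁2 : 2 ≤ C₁ := by
    have := hM1 3; have := hM1 (-3); simp only [hC₁]; linarith
  have hD : ∀ β : ℝ, 0 < β → β ≤ 1 → M (2 * β) - (M β) ^ 2 ≤ 4 * C₁ * β ^ 2 := by
    intro β hβ0 hβ1
    have hsq : ∫ V, (Real.exp (β * V (1, 0)) - 1) ^ 2 ∂Q = M (2 * β) - 2 * M β + 1 := by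
      have := expand β 1; simpa using this
    have hintsq : Integrable (fun V : (ℕ × ℤ) → ℝ => (Real.exp (β * V (1, 0)) - 1) ^ 2) Q := by
      have : (fun V : (ℕ × ℤ) → ℝ => (Real.exp (β * V (1, 0)) - 1) ^ 2)
          = fun V => (Real.exp (2 * β * V (1, 0)) - 2 * Real.exp (β * V (1, 0))) + 1 := by
        funext V
        have h2 : Real.exp (2 * β * V (1, 0)) = Real.exp (β * V (1, 0)) ^ 2 := by
          rw [sq, ← Real.exp_add]; congr 1; ring
        rw [h2]; ring
      rw [this]
      exact ((hInt (2 * β)).sub ((hInt β).const_mul 2)).add (integrable_const 1)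
    have hptbd : ∀ V : (ℕ × ℤ) → ℝ, (Real.exp (β * V (1, 0)) - 1) ^ 2
        ≤ 4 * β ^ 2 * (Real.exp (3 * V (1, 0)) + Real.exp (-3 * V (1, 0))) := by
      intro V
      set t : ℝ := V (1, 0) with ht
      have ha : |Real.exp (β * t) - 1| ≤ |β * t| * Real.exp |β * t| := exp_sub_one_abs_le _
      have hb : |β * t| = β * |t| := by rw [abs_mul, abs_of_pos hβ0]
      have hexp : Real.exp (β * |t|) ≤ Real.exp |t| := by
        apply Real.exp_le_exp.mpr
        nlinarith [abs_nonneg t]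
      have hc : |Real.exp (β * t) - 1| ≤ β * |t| * Real.exp |t| := by
        rw [hb] at ha
        calc |Real.exp (β * t) - 1| ≤ β * |t| * Real.exp (β * |t|) := ha
          _ ≤ β * |t| * Real.exp |t| := by
              apply mul_le_mul_of_nonneg_left hexp (by positivity)
      have hd1 : (Real.exp (β * t) - 1) ^ 2 ≤ (β * |t| * Real.exp |t|) ^ 2 := by
        rw [← sq_abs (Real.exp (β * t) - 1)]
        apply pow_le_pow_left₀ (abs_nonneg _) hc
      have hd2 : (β * |t| * Real.exp |t|) ^ 2 = β ^ 2 * t ^ 2 * (Real.exp |t|) ^ 2 := by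
        rw [mul_pow, mul_pow, sq_abs]
      have hd3 : β ^ 2 * t ^ 2 * (Real.exp |t|) ^ 2 ≤ β ^ 2 * (4 * Real.exp |t|) * (Real.exp |t|) ^ 2 := by
        apply mul_le_mul_of_nonneg_right _ (by positivity)
        apply mul_le_mul_of_nonneg_left (sq_le_four_exp_abs t) (by positivity)
      have hd4 : β ^ 2 * (4 * Real.exp |t|) * (Real.exp |t|) ^ 2 = 4 * β ^ 2 * Real.exp (3 * |t|) := by
        have : Real.exp (3 * |t|) = Real.exp |t| * (Real.exp |t|) ^ 2 := by
          rw [sq, ← Real.exp_add, ← Real.exp_add]; congr 1; ring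
        rw [this]; ring
      have hd5 : Real.exp (3 * |t|) ≤ Real.exp (3 * t) + Real.exp (-3 * t) := by
        have h3 : 3 * |t| = |3 * t| := by rw [abs_mul]; norm_num
        rw [h3]
        have := Real.exp_abs_le (3 * t)
        simpa [neg_mul] using this
      nlinarith [sq_nonneg β]
    have hmono : ∫ V, (Real.exp (β * V (1, 0)) - 1) ^ 2 ∂Q
        ≤ ∫ V, 4 * β ^ 2 * (Real.exp (3 * V (1, 0)) + Real.exp (-3 * V (1, 0))) ∂Q := by
      apply integral_mono hintsq _ hptbd
      exact (((hInt 3).add (hInt (-3))).const_mul _)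
    have hval : ∫ V, 4 * β ^ 2 * (Real.exp (3 * V (1, 0)) + Real.exp (-3 * V (1, 0))) ∂Q
        = 4 * β ^ 2 * C₁ := by
      rw [integral_const_mul, integral_add (hInt 3) (hInt (-3))]
    have hMβ := hM1 β
    rw [hsq] at hmono
    rw [hval] at hmono
    nlinarith [sq_nonneg (M β - 1)]
  refine ⟨4 * C₁, by linarith, ?_⟩
  intro β hβ0 hβ1
  have hA := hM1 β
  have hB := hVar β
  have hD' := hD β hβ0 hβ1
  have hApos : (0:ℝ) < M β := hMpos β
  have hBpos : (0:ℝ) < M (2 * β) := hMpos (2 * β)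
  have hlogM : logMGF Q (2 * β) = Real.log (M (2 * β)) := rfl
  have hlogm : logMGF Q β = Real.log (M β) := rfl
  have h2log : 2 * logMGF Q β = Real.log ((M β) ^ 2) := by
    rw [hlogm, Real.log_pow]
    push_cast
    ring
  constructor
  · rw [hlogM, h2log]
    have : Real.log ((M β) ^ 2) ≤ Real.log (M (2 * β)) :=
      Real.log_le_log (by positivity) hB
    linarith
  · rw [hlogM, h2log, ← Real.log_div (ne_of_gt hBpos) (by positivity)]
    have hfrac : M (2 * β) / (M β) ^ 2 ≤ 1 + 4 * C₁ * β ^ 2 := by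
      rw [div_le_iff₀ (by positivity)]
      have h1A : 1 ≤ (M β) ^ 2 := by nlinarith
      nlinarith [mul_le_mul_of_nonneg_left h1A (by positivity : (0:ℝ) ≤ 4 * C₁ * β ^ 2)]
    have hpos : (0:ℝ) < M (2 * β) / (M β) ^ 2 := by positivity
    calc Real.log (M (2 * β) / (M β) ^ 2) ≤ M (2 * β) / (M β) ^ 2 - 1 :=
          Real.log_le_sub_one_of_pos hpos
      _ ≤ 4 * C₁ * β ^ 2 := by linarith


lemma sum_one_eq_four_pow (n : ℕ) :
    ∑ _στ : (Fin n → Bool) × (Fin n → Bool), (1:ℝ) = 4 ^ n := by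
  rw [Finset.sum_const, Finset.card_univ, nsmul_eq_mul, mul_one]
  rw [Fintype.card_prod, Fintype.card_fun, Fintype.card_fin, Fintype.card_bool]
  push_cast
  rw [← mul_pow]
  norm_num

lemma overlapExp_eq (c : ℝ) (R : ℕ) :
    overlapExp c R = Real.exp c * Zfun c R - 1 := by
  unfold overlapExp Zfun
  have hpt : ∀ στ : (Fin R → Bool) × (Fin R → Bool),
      Real.exp (c * (overlap στ.1 στ.2 + 1)) - 1
        = Real.exp c * Real.exp (c * overlap στ.1 στ.2) - 1 := by
    intro στ
    rw [mul_add, mul_one, Real.exp_add]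
    ring_nf
  rw [Finset.sum_congr rfl fun στ _ => hpt στ, Finset.sum_sub_distrib,
    sum_one_eq_four_pow, ← Finset.mul_sum]
  have h4 : (0:ℝ) < 4 ^ R := by positivity
  field_simp

/-- Let `0 < a < 1`. There exist `K₅ = K₅(a) > 0` and `β₀ > 0` such that for
all `0 < β ≤ β₀` and all integers `1 ≤ R ≤ K₅ β^{−4}`,
`E^{⊗2}_{(0,0)}[e^{2Φ(β)(B_R+1)} − 1] ≤ a`, where `Φ(β) = Λ(2β) − 2Λ(β)`. -/
theorem overlap_second_moment_bound
    (Q : Measure ((ℕ × ℤ) → ℝ)) (hQ : EnvAssumptions Q)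
    (a : ℝ) (ha0 : 0 < a) (ha1 : a < 1) :
    ∃ K₅ > 0, ∃ β₀ > 0, ∀ β : ℝ, 0 < β → β ≤ β₀ →
      ∀ R : ℕ, 1 ≤ R → (R : ℝ) ≤ K₅ / β ^ 4 →
        overlapExp (2 * (logMGF Q (2 * β) - 2 * logMGF Q β)) R ≤ a := by
  obtain ⟨C₀, hC₀1, hΦ⟩ := phi_bound Q hQ
  have hC₀0 : (0:ℝ) < C₀ := by linarith
  refine ⟨(a / (48 * C₀)) ^ 2, by positivity, min 1 (Real.sqrt (a / (24 * C₀))), ?_, ?_⟩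
  · apply lt_min one_pos
    apply Real.sqrt_pos.mpr
    positivity
  intro β hβ0 hββ0 R hR1 hRK
  set c : ℝ := 2 * (logMGF Q (2 * β) - 2 * logMGF Q β) with hc_def
  have hβ1 : β ≤ 1 := le_trans hββ0 (min_le_left _ _)
  have hβs : β ≤ Real.sqrt (a / (24 * C₀)) := le_trans hββ0 (min_le_right _ _)
  have hβ2 : β ^ 2 ≤ a / (24 * C₀) := by
    have h1 : β ^ 2 ≤ Real.sqrt (a / (24 * C₀)) ^ 2 := pow_le_pow_left₀ hβ0.le hβs 2
    have h2 : Real.sqrt (a / (24 * C₀)) ^ 2 = a / (24 * C₀) := Real.sq_sqrt (by positivity)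
    linarith
  obtain ⟨hΦ0, hΦle⟩ := hΦ β hβ0 hβ1
  have hc0 : 0 ≤ c := by rw [hc_def]; linarith
  have hcβ : c ≤ 2 * C₀ * β ^ 2 := by rw [hc_def]; linarith
  have hca : c ≤ a / 12 := by
    have : 2 * C₀ * β ^ 2 ≤ 2 * C₀ * (a / (24 * C₀)) :=
      mul_le_mul_of_nonneg_left hβ2 (by positivity)
    have heq : 2 * C₀ * (a / (24 * C₀)) = a / 12 := by field_simp; ring
    linarith
  have hc1 : c ≤ 1 := by linarith
  have hec3 : Real.exp c - 1 ≤ 3 * c := by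
    have hmul : Real.exp (-c) * Real.exp c = 1 := by rw [← Real.exp_add]; simp
    have h1 : Real.exp c - 1 ≤ c * Real.exp c := by
      nlinarith [Real.add_one_le_exp (-c), Real.exp_pos c]
    have h2 : Real.exp c ≤ Real.exp 1 := Real.exp_le_exp.mpr hc1
    have h3 : Real.exp 1 ≤ 3 := by
      have := Real.exp_one_lt_d9
      linarith
    nlinarith [Real.exp_pos c]
  set S : ℝ := ∑ j ∈ Finset.range R, (Nat.centralBinom (j + 1) : ℝ) / 4 ^ (j + 1) with hS_def
  have hS0 : 0 ≤ S := by
    rw [hS_def]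
    apply Finset.sum_nonneg
    intro j _
    positivity
  have hS2 : S ≤ 2 * Real.sqrt R := by
    rw [hS_def]
    calc ∑ j ∈ Finset.range R, (Nat.centralBinom (j + 1) : ℝ) / 4 ^ (j + 1)
        ≤ ∑ j ∈ Finset.range R, 1 / Real.sqrt (j + 1) := by
          apply Finset.sum_le_sum
          intro j _
          have := u_le_inv_sqrt (j + 1) (by omega)
          have hcast : ((j + 1 : ℕ) : ℝ) = (j : ℝ) + 1 := by push_cast; ring
          rw [hcast] at this
          exact this
      _ ≤ 2 * Real.sqrt R := sum_inv_sqrt_le R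
  have hsqK : Real.sqrt ((a / (48 * C₀)) ^ 2) = a / (48 * C₀) := Real.sqrt_sq (by positivity)
  have hsqrtR : Real.sqrt R ≤ (a / (48 * C₀)) / β ^ 2 := by
    have h1 : Real.sqrt R ≤ Real.sqrt ((a / (48 * C₀)) ^ 2 / β ^ 4) := Real.sqrt_le_sqrt hRK
    have h2 : Real.sqrt ((a / (48 * C₀)) ^ 2 / β ^ 4) = (a / (48 * C₀)) / β ^ 2 := by
      rw [Real.sqrt_div (by positivity) _, hsqK]
      congr 1
      have : β ^ 4 = (β ^ 2) ^ 2 := by ring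
      rw [this, Real.sqrt_sq (by positivity)]
    linarith
  set ρ : ℝ := (Real.exp c - 1) * S with hρ_def
  have hec0 : 0 ≤ Real.exp c - 1 := by
    have := Real.one_le_exp hc0
    linarith
  have hρ0 : 0 ≤ ρ := mul_nonneg hec0 hS0
  have hρa : ρ ≤ a / 4 := by
    have h6 : ρ ≤ 3 * c * (2 * Real.sqrt R) := by
      calc ρ ≤ 3 * c * S := mul_le_mul_of_nonneg_right hec3 hS0
        _ ≤ 3 * c * (2 * Real.sqrt R) := by
            apply mul_le_mul_of_nonneg_left hS2 (by positivity)
    have h7 : 3 * c * (2 * Real.sqrt R) = 6 * c * Real.sqrt R := by ring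
    have h8 : 6 * c * Real.sqrt R ≤ 6 * (2 * C₀ * β ^ 2) * ((a / (48 * C₀)) / β ^ 2) := by
      apply mul_le_mul
      · linarith
      · exact hsqrtR
      · exact Real.sqrt_nonneg _
      · positivity
    have h9 : 6 * (2 * C₀ * β ^ 2) * ((a / (48 * C₀)) / β ^ 2) = a / 4 := by
      field_simp
      ring
    linarith
  have hρ12 : ρ ≤ 1 / 2 := by linarith
  have hZ : Zfun c R ≤ 1 / (1 - ρ) := Zfun_le c ρ hρ12 hρ0 hc0 R (le_of_eq hρ_def.symm) R le_rfl
  have h1ρ : 0 < 1 - ρ := by linarith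
  rw [overlapExp_eq]
  have hec : Real.exp c ≤ 1 + a / 4 := by linarith
  have hZ0 : Real.exp c * Zfun c R ≤ Real.exp c * (1 / (1 - ρ)) :=
    mul_le_mul_of_nonneg_left hZ (Real.exp_pos c).le
  have hfinal : Real.exp c * (1 / (1 - ρ)) ≤ 1 + a := by
    rw [mul_one_div, div_le_iff₀ h1ρ]
    nlinarith
  linarith

end
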